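/- Let N ≥ 1, let B be a positive-definite N×N real matrix, and let θ, z ∈ ℝ^N and α ∈ ℝ. Define w = −B^{−1}θ, A = B + z zᵀ (also positive definite), and w' = −A^{−1}(θ + α z). Then for every u ∈ ℝ^N: (1/2)(⟨w, z⟩ + α)²(1 − zᵀ A^{−1} z) − (1/2)(⟨u, z⟩ + α)² ≤ (1/2)(u − w)ᵀ B (u − w) − (1/2)(u − w')ᵀ A (u − w'). -/

import Mathlib

open Matrix

private lemma vmv_mulVec {N : ℕ} (z x : Fin N → ℝ) :
    Matrix.vecMulVec z z *ᵥ x = (z ⬝ᵥ x) • z := by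
  ext i
  simp only [Matrix.mulVec, Matrix.vecMulVec_apply, Pi.smul_apply, smul_eq_mul,
    dotProduct, Finset.mul_sum]
  rw [Finset.sum_mul]
  exact Finset.sum_congr rfl fun j _ => by ring

theorem online_least_squares_per_step
    (N : ℕ) (hN : 1 ≤ N)
    (B : Matrix (Fin N) (Fin N) ℝ) (hB : B.PosDef)
    (θ z : Fin N → ℝ) (α : ℝ)
    (w : Fin N → ℝ) (hw : w = -(B⁻¹ *ᵥ θ))
    (A : Matrix (Fin N) (Fin N) ℝ) (hA : A = B + Matrix.vecMulVec z z)
    (w' : Fin N → ℝ) (hw' : w' = -(A⁻¹ *ᵥ (θ + α • z)))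
    (u : Fin N → ℝ) :
    1 / 2 * (w ⬝ᵥ z + α) ^ 2 * (1 - z ⬝ᵥ (A⁻¹ *ᵥ z)) - 1 / 2 * (u ⬝ᵥ z + α) ^ 2
      ≤ 1 / 2 * ((u - w) ⬝ᵥ (B *ᵥ (u - w))) - 1 / 2 * ((u - w') ⬝ᵥ (A *ᵥ (u - w'))) := by
  -- A is positive definite
  have hzz : (Matrix.vecMulVec z z).PosSemidef := by
    rw [Matrix.posSemidef_iff_dotProduct_mulVec]
    constructor
    · ext i j
      simp [Matrix.vecMulVec_apply, Matrix.conjTranspose_apply, mul_comm]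
    · intro x
      have hx : star x = x := rfl
      rw [hx, vmv_mulVec, dotProduct_smul, dotProduct_comm]
      simpa [smul_eq_mul] using mul_self_nonneg (x ⬝ᵥ z)
  have hApd : A.PosDef := hA ▸ hB.add_posSemidef hzz
  have hAu : IsUnit A.det := hApd.det_pos.ne'.isUnit
  have hBu : IsUnit B.det := hB.det_pos.ne'.isUnit
  -- basic facts
  have hBw : B *ᵥ w = -θ := by
    rw [hw, Matrix.mulVec_neg, Matrix.mulVec_mulVec, Matrix.mul_nonsing_inv _ hBu,
      Matrix.one_mulVec]
  have hAw' : A *ᵥ w' = -(θ + α • z) := by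
    rw [hw', Matrix.mulVec_neg, Matrix.mulVec_mulVec, Matrix.mul_nonsing_inv _ hAu,
      Matrix.one_mulVec]
  set c : ℝ := z ⬝ᵥ w with hc
  have hAd : A *ᵥ (w - w') = (c + α) • z := by
    rw [Matrix.mulVec_sub, hAw', hA, Matrix.add_mulVec, vmv_mulVec]
    ext i
    simp [hBw]
    ring
  have hd : w - w' = (c + α) • (A⁻¹ *ᵥ z) := by
    have := congrArg (fun v => A⁻¹ *ᵥ v) hAd
    simpa [Matrix.mulVec_mulVec, Matrix.nonsing_inv_mul _ hAu, Matrix.one_mulVec,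
      Matrix.mulVec_smul] using this
  -- A symmetric
  have hAsymm : Aᵀ = A := by
    ext i j
    simp only [hA, Matrix.transpose_apply, Matrix.add_apply, Matrix.vecMulVec_apply]
    rw [mul_comm]
    congr 1
    simpa using (hB.isHermitian.apply j i).symm
  set s : ℝ := z ⬝ᵥ (A⁻¹ *ᵥ z) with hs
  set x : Fin N → ℝ := u - w with hx
  have hsplit : u - w' = x + (w - w') := by rw [hx]; abel
  -- expand the quadratic form at u - w'
  have hcross : (w - w') ⬝ᵥ (A *ᵥ x) = x ⬝ᵥ (A *ᵥ (w - w')) := by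
    rw [Matrix.dotProduct_mulVec, ← Matrix.mulVec_transpose, hAsymm, dotProduct_comm]
  have hdz : (w - w') ⬝ᵥ z = (c + α) * s := by
    rw [hd, smul_dotProduct, hs, dotProduct_comm]
    simp [smul_eq_mul]
  have hexp : (u - w') ⬝ᵥ (A *ᵥ (u - w'))
      = x ⬝ᵥ (A *ᵥ x) + 2 * ((c + α) * (x ⬝ᵥ z)) + (c + α) ^ 2 * s := by
    rw [hsplit, add_dotProduct, Matrix.mulVec_add, dotProduct_add,
      dotProduct_add, hcross, hAd, dotProduct_smul, dotProduct_smul,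
      hdz]
    simp only [smul_eq_mul]
    ring
  have hAx : x ⬝ᵥ (A *ᵥ x) = x ⬝ᵥ (B *ᵥ x) + (x ⬝ᵥ z) ^ 2 := by
    rw [hA, Matrix.add_mulVec, dotProduct_add, vmv_mulVec, dotProduct_smul,
      dotProduct_comm z x, smul_eq_mul]
    ring
  have hxz : x ⬝ᵥ z = u ⬝ᵥ z - w ⬝ᵥ z := by
    rw [hx, sub_dotProduct]
  have hwz : w ⬝ᵥ z = c := by rw [hc, dotProduct_comm]
  rw [hexp, hAx, hxz, hwz]
  apply le_of_eq
  ring
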